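/- Let H : [0,1] → ℝ be given by H(0) = 0 and H(x) = x·log(1/x) for x ∈ (0,1]. Then lim_{r→∞} ( sup { limsup_{m→∞} (Σ_{n=1}^m H(a_n)) / (Σ_{n=1}^m n·a_n) : (a_n) ∈ 𝔸_r } ) = 0; that is, for every ε > 0 there exists r₀ ≥ 1 such that for every r ≥ r₀ and every sequence (a_n) ∈ 𝔸_r one has limsup_{m→∞} (Σ_{n=1}^m H(a_n)) / (Σ_{n=1}^m n·a_n) ≤ ε. -/

import Mathlib

open Filter

/-- `H : [0,1] → ℝ`, `H 0 = 0` and `H x = x * log (1/x)` for `x ∈ (0,1]`. -/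
noncomputable def Hfun (x : ℝ) : ℝ := if x = 0 then 0 else x * Real.log (1 / x)

/-- `(a_n)_{n≥1} ∈ 𝔸_r`: nonnegative terms, `∑_{n≥1} a_n ≤ 1` and
`r ≤ ∑_{n≥1} n · a_n` (the latter series, taken in `ℝ≥0∞`, may be infinite). -/
def memA (r : ℝ) (a : ℕ → ℝ) : Prop :=
  (∀ n : ℕ, 1 ≤ n → 0 ≤ a n) ∧
  (∀ m : ℕ, ∑ n ∈ Finset.Icc 1 m, a n ≤ 1) ∧
  ENNReal.ofReal r ≤ ∑' n : ℕ, ENNReal.ofReal ((n : ℝ) * a n)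

lemma Hfun_nonneg {x : ℝ} (h0 : 0 ≤ x) (h1 : x ≤ 1) : 0 ≤ Hfun x := by
  unfold Hfun
  split_ifs with h
  · exact le_refl 0
  · have hx : 0 < x := lt_of_le_of_ne h0 (Ne.symm h)
    have : (1 : ℝ) ≤ 1 / x := (le_div_iff₀ hx).2 (by linarith)
    have := Real.log_nonneg this
    positivity

lemma Hfun_le (x t : ℝ) (hx : 0 ≤ x) : Hfun x ≤ t * x + Real.exp (-t - 1) := by
  unfold Hfun
  split_ifs with h
  · rw [h]
    simpa using (Real.exp_pos (-t - 1)).le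
  · have hx' : 0 < x := lt_of_le_of_ne hx (Ne.symm h)
    have hpos : 0 < Real.exp (-t - 1) / x := div_pos (Real.exp_pos _) hx'
    have hlog := Real.log_le_sub_one_of_pos hpos
    rw [Real.log_div (ne_of_gt (Real.exp_pos _)) (ne_of_gt hx'), Real.log_exp] at hlog
    · have h1x : Real.log (1 / x) = - Real.log x := by
        rw [one_div, Real.log_inv]
      rw [h1x]
      have hxe : x * (Real.exp (-t - 1) / x - 1) = Real.exp (-t - 1) - x := by
        field_simp
      have hmul := mul_le_mul_of_nonneg_left hlog hx
      rw [hxe] at hmul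
      nlinarith [hmul]

theorem stmt0 (ε : ℝ) (hε : 0 < ε) :
    ∃ r₀ : ℝ, 1 ≤ r₀ ∧ ∀ r : ℝ, r₀ ≤ r → ∀ a : ℕ → ℝ, memA r a →
      Filter.limsup (fun m : ℕ =>
          (∑ n ∈ Finset.Icc 1 m, Hfun (a n)) / (∑ n ∈ Finset.Icc 1 m, (n : ℝ) * a n))
        Filter.atTop ≤ ε := by
  set c := ε / 2 with hc
  have hc0 : 0 < c := by positivity
  set q := Real.exp (-c) with hqdef
  have hq1 : q < 1 := by
    rw [hqdef]
    exact Real.exp_lt_one_iff.2 (by linarith)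
  have hq0 : 0 < q := Real.exp_pos _
  have h1q : 0 < 1 - q := by linarith
  set C := 1 / (1 - q) with hCdef
  have hC0 : 0 < C := by positivity
  refine ⟨max 1 (4 * C / ε), le_max_left _ _, ?_⟩
  rintro r hr a ⟨ha0, ha1, ha2⟩
  have hr1 : 1 ≤ r := le_trans (le_max_left _ _) hr
  have hrC : 4 * C / ε ≤ r := le_trans (le_max_right _ _) hr
  have hr0 : 0 < r := by linarith
  have haub : ∀ n : ℕ, 1 ≤ n → a n ≤ 1 := by
    intro n hn
    calc a n ≤ ∑ k ∈ Finset.Icc 1 n, a k :=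
          Finset.single_le_sum (fun k hk => ha0 k (Finset.mem_Icc.1 hk).1)
            (Finset.mem_Icc.2 ⟨hn, le_rfl⟩)
      _ ≤ 1 := ha1 n
  set D : ℕ → ℝ := fun m => ∑ n ∈ Finset.Icc 1 m, (n : ℝ) * a n with hD
  have hDnonneg : ∀ m, 0 ≤ D m := by
    intro m
    apply Finset.sum_nonneg
    intro n hn
    exact mul_nonneg (Nat.cast_nonneg n) (ha0 n (Finset.mem_Icc.1 hn).1)
  have hNnonneg : ∀ m, 0 ≤ ∑ n ∈ Finset.Icc 1 m, Hfun (a n) := by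
    intro m
    apply Finset.sum_nonneg
    intro n hn
    exact Hfun_nonneg (ha0 n (Finset.mem_Icc.1 hn).1) (haub n (Finset.mem_Icc.1 hn).1)
  have hev : ∀ᶠ m in atTop, r / 2 ≤ D m := by
    have h2 : ENNReal.ofReal (r / 2) < ∑' n : ℕ, ENNReal.ofReal ((n : ℝ) * a n) :=
      lt_of_lt_of_le (by exact_mod_cast ENNReal.ofReal_lt_ofReal_iff hr0 |>.2 (by linarith)) ha2
    rw [ENNReal.tsum_eq_iSup_sum] at h2
    obtain ⟨s, hs⟩ := lt_iSup_iff.1 h2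
    filter_upwards [eventually_ge_atTop (s.sup id)] with m hm
    have hsub : s ⊆ Finset.Icc 0 m := by
      intro k hk
      exact Finset.mem_Icc.2 ⟨Nat.zero_le _, le_trans (Finset.le_sup (f := id) hk) hm⟩
    have h3 : ENNReal.ofReal (r / 2) < ∑ n ∈ Finset.Icc 0 m, ENNReal.ofReal ((n : ℝ) * a n) :=
      lt_of_lt_of_le hs (Finset.sum_le_sum_of_subset hsub)
    have h0m : ∑ n ∈ Finset.Icc 0 m, ENNReal.ofReal ((n : ℝ) * a n)
        = ∑ n ∈ Finset.Icc 1 m, ENNReal.ofReal ((n : ℝ) * a n) := by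
      have : Finset.Icc 0 m = insert 0 (Finset.Icc 1 m) := by
        ext k
        simp [Nat.le_of_lt_succ, Nat.lt_iff_add_one_le, Nat.pos_iff_ne_zero]
        omega
      rw [this, Finset.sum_insert (by simp)]
      simp
    have h4 : ∑ n ∈ Finset.Icc 1 m, ENNReal.ofReal ((n : ℝ) * a n) = ENNReal.ofReal (D m) := by
      rw [hD]
      exact (ENNReal.ofReal_sum_of_nonneg (fun n hn =>
        mul_nonneg (Nat.cast_nonneg n) (ha0 n (Finset.mem_Icc.1 hn).1))).symm
    rw [h0m, h4] at h3
    exact (ENNReal.ofReal_le_ofReal_iff (hDnonneg m)).1 h3.le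
  have key : ∀ᶠ m in atTop,
      (∑ n ∈ Finset.Icc 1 m, Hfun (a n)) / D m ≤ ε := by
    filter_upwards [hev] with m hm
    have hDpos : 0 < D m := lt_of_lt_of_le (by linarith) hm
    have hgeo : ∑ n ∈ Finset.Icc 1 m, Real.exp (-(c * n) - 1) ≤ C := by
      calc ∑ n ∈ Finset.Icc 1 m, Real.exp (-(c * n) - 1)
          ≤ ∑ n ∈ Finset.Icc 1 m, q ^ n := by
            apply Finset.sum_le_sum
            intro n hn
            rw [hqdef, ← Real.exp_nat_mul]
            exact Real.exp_le_exp.2 (by push_cast; nlinarith [Real.exp_pos (1:ℝ)])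
        _ = ∑ n ∈ Finset.Ico 1 (m + 1), q ^ n := by rw [Finset.Ico_add_one_right_eq_Icc]
        _ ≤ q ^ 1 / (1 - q) := geom_sum_Ico_le_of_lt_one hq0.le hq1
        _ ≤ C := by
            rw [hCdef, pow_one]
            gcongr
    have hnum : ∑ n ∈ Finset.Icc 1 m, Hfun (a n) ≤ c * D m + C := by
      calc ∑ n ∈ Finset.Icc 1 m, Hfun (a n)
          ≤ ∑ n ∈ Finset.Icc 1 m, (c * n * a n + Real.exp (-(c * n) - 1)) := by
            apply Finset.sum_le_sum
            intro n hn
            exact Hfun_le (a n) (c * n) (ha0 n (Finset.mem_Icc.1 hn).1)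
        _ = c * D m + ∑ n ∈ Finset.Icc 1 m, Real.exp (-(c * n) - 1) := by
            rw [Finset.sum_add_distrib, hD, Finset.mul_sum]
            congr 1
            apply Finset.sum_congr rfl
            intro n hn
            ring
        _ ≤ c * D m + C := by linarith
    calc (∑ n ∈ Finset.Icc 1 m, Hfun (a n)) / D m
        ≤ (c * D m + C) / D m := by gcongr
      _ = c + C / D m := by field_simp
      _ ≤ c + C / (r / 2) := by gcongr
      _ ≤ ε := by
          have heq : C / (r / 2) = 2 * C / r := by ring
          have h4C : 4 * C ≤ ε * r := by
            rw [div_le_iff₀ hε] at hrC; linarith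
          have h2Cr : 2 * C / r ≤ ε / 2 := by
            rw [div_le_div_iff₀ hr0 (by norm_num : (0:ℝ) < 2)]
            linarith
          rw [heq]
          linarith
  exact Filter.limsup_le_of_le
    (isCoboundedUnder_le_of_le atTop (x := 0)
      (fun m => div_nonneg (hNnonneg m) (hDnonneg m))) key
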